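/- If A is an alphabet with exactly 2 letters, then for every word u over A, h(u) = ρ(u) + 1. -/

import Mathlib

variable {A : Type*}

/-- Simon's congruence of order `k`: `u` and `v` have the same subwords of length ≤ k. -/
def SimonCong (k : ℕ) (u v : List A) : Prop :=
  ∀ s : List A, s.length ≤ k → (s.Sublist u ↔ s.Sublist v)

/-- Subword distance `δ(u,v) = sup {k | u ∼ₖ v} ∈ ℕ∞`. -/
noncomputable def sdelta (u v : List A) : ℕ∞ :=
  sSup {d : ℕ∞ | ∃ k : ℕ, d = k ∧ SimonCong k u v}

/-- Right side distance `r(u,t) = δ(u, u·t)`. -/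
noncomputable def rdist (u t : List A) : ℕ∞ := sdelta u (u ++ t)

/-- Left side distance `ℓ(t,u) = δ(t·u, u)`. -/
noncomputable def ldist (t u : List A) : ℕ∞ := sdelta (t ++ u) u

/-- Piecewise complexity `h(u)`: least `n` such that any `v` with `u ∼ₙ v` equals `u`. -/
noncomputable def pcHeight (u : List A) : ℕ :=
  sInf {n : ℕ | ∀ v : List A, SimonCong n u v → v = u}

/-- `u` is `m`-reduced: no strict subword of `u` is `∼ₘ`-equivalent to `u`. -/
def Reduced (m : ℕ) (u : List A) : Prop :=
  ∀ u' : List A, u'.Sublist u → u' ≠ u → ¬ SimonCong m u u'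

/-- Piecewise minimality index `ρ(u)`: least `m` such that `u` is `m`-reduced. -/
noncomputable def pcRho (u : List A) : ℕ := sInf {m : ℕ | Reduced m u}

/-- An `A`-arch: contains every letter of `A` but no strict prefix does. -/
def IsArch (A : Type*) [Fintype A] (s : List A) : Prop :=
  (∀ a : A, a ∈ s) ∧ ∀ t : List A, t <+: s → t ≠ s → ∃ a : A, a ∉ t

/-- The infinite periodic word `u^ω`. -/
def omegaWord (u : List A) (hu : u ≠ []) (i : ℕ) : A :=
  u.get ⟨i % u.length, Nat.mod_lt i (List.length_pos_of_ne_nil hu)⟩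

/-- The arch-jumping function `α` on `u^ω`: `α(i)` is the least `j > i` such that
every letter of `A` occurs among positions `i, …, j-1` of `u^ω`. -/
noncomputable def archJump (u : List A) (hu : u ≠ []) (i : ℕ) : ℕ :=
  sInf {j : ℕ | i < j ∧ ∀ a : A, ∃ m : ℕ, i ≤ m ∧ m < j ∧ omegaWord u hu m = a}

/-- `p` is an arch-period of `u` starting at `i`. -/
def IsArchPeriodAt (u : List A) (hu : u ≠ []) (i p : ℕ) : Prop :=
  0 < p ∧ ∃ k : ℕ, (archJump u hu)^[k + p] i ≡ (archJump u hu)^[k] i [MOD u.length]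

/-- The arch-period of `u`: the least arch-period starting at 0. -/
noncomputable def archPeriod (u : List A) (hu : u ≠ []) : ℕ :=
  sInf {p : ℕ | IsArchPeriodAt u hu 0 p}

/-- `K_u`: the least `k` with `α^{k+p}(0) ≡ α^k(0) (mod L)`. -/
noncomputable def archTransientIndex (u : List A) (hu : u ≠ []) : ℕ :=
  sInf {k : ℕ |
    (archJump u hu)^[k + archPeriod u hu] 0 ≡ (archJump u hu)^[k] 0 [MOD u.length]}

/-- The transient `T_u = α^{K_u}(0)`. -/
noncomputable def archTransient (u : List A) (hu : u ≠ []) : ℕ :=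
  (archJump u hu)^[archTransientIndex u hu] 0

/-- The span `Δ_u = α^{K_u+p_u}(0) − α^{K_u}(0)`. -/
noncomputable def archSpan (u : List A) (hu : u ≠ []) : ℕ :=
  (archJump u hu)^[archTransientIndex u hu + archPeriod u hu] 0 - archTransient u hu

/-- `u^n`: the `n`-fold concatenation of `u`. -/
def listPow (u : List A) (n : ℕ) : List A := (List.replicate n u).flatten

namespace SCAux


/-- deletion of one letter staying `∼ₖ`-equivalent -/
def SCDel (k : ℕ) (u : List A) : Prop :=
  ∃ x : List A, ∃ c : A, ∃ y : List A, u = x ++ c :: y ∧ SimonCong k u (x ++ y)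

lemma simon_zero (u v : List A) : SimonCong 0 u v := by
  intro s hs
  have : s = [] := List.eq_nil_of_length_eq_zero (Nat.le_zero.mp hs)
  subst this; simp

lemma simon_symm {k : ℕ} {u v : List A} (h : SimonCong k u v) : SimonCong k v u :=
  fun s hs => (h s hs).symm

lemma simon_mono {k k' : ℕ} (hk : k' ≤ k) {u v : List A} (h : SimonCong k u v) :
    SimonCong k' u v := fun s hs => h s (le_trans hs hk)

lemma simon_sandwich_up {k : ℕ} {u v w : List A} (h : SimonCong k u v)
    (h1 : u.Sublist w) (h2 : w.Sublist v) : SimonCong k u w := by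
  intro s hs
  exact ⟨fun hsu => hsu.trans h1, fun hsw => (h s hs).mpr (hsw.trans h2)⟩

lemma simon_sandwich_down {k : ℕ} {u v w : List A} (h : SimonCong k u v)
    (h1 : v.Sublist w) (h2 : w.Sublist u) : SimonCong k u w := by
  intro s hs
  exact ⟨fun hsu => ((h s hs).mp hsu).trans h1, fun hsw => hsw.trans h2⟩

lemma sub_of_cons_ne {a b : A} {s t : List A} (h : (a :: s).Sublist (b :: t))
    (hab : a ≠ b) : (a :: s).Sublist t := by
  rcases List.sublist_cons_iff.mp h with h' | ⟨r, hr, _⟩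
  · exact h'
  · exfalso; apply hab; have := congrArg List.head? hr; simpa using this

lemma exists_first_occ {a : A} {l : List A} (h : a ∈ l) :
    ∃ s t : List A, l = s ++ a :: t ∧ a ∉ s := by
  induction l with
  | nil => cases h
  | cons b l ih =>
    by_cases hb : a = b
    · exact ⟨[], l, by simp [hb], by simp⟩
    · rcases List.mem_cons.mp h with h' | h'
      · exact absurd h' hb
      · obtain ⟨s, t, rfl, hs⟩ := ih h'
        exact ⟨b :: s, t, by simp, by simp [hs, hb]⟩

lemma skip_first {a : A} {s v₀ v₁ : List A} (h : (a :: s).Sublist (v₀ ++ a :: v₁))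
    (ha : a ∉ v₀) : s.Sublist v₁ := by
  induction v₀ with
  | nil => exact (List.cons_sublist_cons).mp h
  | cons b t ih =>
    have hab : a ≠ b := by simp at ha; exact ha.1
    exact ih (sub_of_cons_ne h hab) (by simp at ha; exact ha.2)

lemma decomp_first {n : ℕ} {u v u₀ u₁ v₀ v₁ : List A} {a : A}
    (h : SimonCong (n + 1) u v) (hu : u = u₀ ++ a :: u₁) (hu0 : a ∉ u₀)
    (hv : v = v₀ ++ a :: v₁) (hv0 : a ∉ v₀) : SimonCong n u₁ v₁ := by
  intro s hs
  constructor
  · intro h1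
    have h2 : (a :: s).Sublist u := by
      rw [hu]
      exact ((List.cons_sublist_cons).mpr h1).trans (by simpa using (List.nil_sublist _).append (List.Sublist.refl _) : (_ : List _).Sublist _)
    have h3 : (a :: s).Sublist v := (h _ (by simpa using Nat.succ_le_succ hs)).mp h2
    exact skip_first (hv ▸ h3) hv0
  · intro h1
    have h2 : (a :: s).Sublist v := by
      rw [hv]
      exact ((List.cons_sublist_cons).mpr h1).trans (by simpa using (List.nil_sublist _).append (List.Sublist.refl _) : (_ : List _).Sublist _)
    have h3 : (a :: s).Sublist u := (h _ (by simpa using Nat.succ_le_succ hs)).mpr h2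
    exact skip_first (hu ▸ h3) hu0

/-- if `s₁ ++ g :: rest` embeds in `X ++ Z` then either `s₁ ++ [g]` embeds in `X`
or `g :: rest` embeds in `Z`. -/
lemma c_dichotomy {s₁ rest X Z : List A} {g : A}
    (h : (s₁ ++ g :: rest).Sublist (X ++ Z)) :
    (s₁ ++ [g]).Sublist X ∨ (g :: rest).Sublist Z := by
  rcases List.sublist_append_iff.mp h with ⟨t₁, t₂, heq, h1, h2⟩
  rcases List.append_eq_append_iff.mp heq with ⟨m, hm1, hm2⟩ | ⟨m, hm1, hm2⟩
  · -- t₁ = s₁ ++ m, g :: rest = m ++ t₂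
    cases m with
    | nil =>
      right; simp at hm2; exact hm2 ▸ h2
    | cons g' m' =>
      left
      have hg : g' = g := by
        have := congrArg List.head? hm2; simpa using this.symm
      have hsub : (s₁ ++ [g']).Sublist t₁ := by
        rw [hm1]
        exact (List.Sublist.refl s₁).append (by simp)
      exact hg ▸ (hsub.trans h1)
  · -- s₁ = t₁ ++ m, t₂ = m ++ g :: rest
    right
    have : (g :: rest).Sublist t₂ := by
      rw [hm2]; simpa using (List.nil_sublist m).append (List.Sublist.refl (g :: rest))
    exact this.trans h2



lemma claim_I {k : ℕ} {u v v₁ u₂ : List A} {a b : A}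
    (h : SimonCong k u v) (hv : v = b :: v₁) (hu : u = a :: u₂) (hab : a ≠ b) :
    SimonCong k (b :: u) u := by
  cases k with
  | zero => exact simon_zero _ _
  | succ n =>
    intro s hs
    constructor
    · intro hsbu
      rcases List.sublist_cons_iff.mp hsbu with h' | ⟨s₂, rfl, hs₂⟩
      · exact h'
      · have hs₂len : s₂.length ≤ n + 1 := by simp at hs; omega
        have hs₂v : s₂.Sublist v := (h _ hs₂len).mp hs₂
        rw [hv] at hs₂v
        rcases List.sublist_cons_iff.mp hs₂v with h2 | ⟨s₃, rfl, hs₃⟩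
        · -- s₂ <+ v₁, so b :: s₂ <+ v, hence <+ u
          have : (b :: s₂).Sublist v := by
            rw [hv]; exact (List.cons_sublist_cons).mpr h2
          exact (h _ hs).mpr this
        · -- s₂ = b :: s₃ with s₃ <+ v₁
          have hbu₂ : (b :: s₃).Sublist u₂ := sub_of_cons_ne (hu ▸ hs₂) (Ne.symm hab)
          have hav : a ∈ v := by
            have h1 : List.Sublist [a] u := by
              rw [hu]; exact List.singleton_sublist.mpr (List.mem_cons_self : a ∈ a :: u₂)
            have h2 := (h _ (by simp)).mp h1
            exact List.singleton_sublist.mp h2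
          obtain ⟨w₀, w₁, hvw, hw₀⟩ := exists_first_occ hav
          have hw₀ne : w₀ ≠ [] := by
            rintro rfl
            rw [hv] at hvw
            simp at hvw
            exact hab hvw.1.symm
          obtain ⟨b', w₀', rfl⟩ := List.exists_cons_of_ne_nil hw₀ne
          have hvw2 : b = b' ∧ v₁ = w₀' ++ a :: w₁ := by
            rw [hv] at hvw
            exact ⟨(List.cons.injEq _ _ _ _ ▸ hvw).1, (List.cons.injEq _ _ _ _ ▸ hvw).2⟩
          have hvw' : v₁ = w₀' ++ a :: w₁ := hvw2.2
          have hu' : u = [] ++ a :: u₂ := by simpa using hu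
          have hd : SimonCong n u₂ w₁ :=
            decomp_first h hu' (by simp) hvw (by simpa using hw₀)
          have hs₃len : (b :: s₃).length ≤ n := by simp at hs ⊢; omega
          have hW : (b :: s₃).Sublist w₁ := (hd _ hs₃len).mp hbu₂
          have hV : (b :: s₃).Sublist v₁ := by
            rw [hvw']
            exact (hW.trans (List.sublist_cons_self a w₁)).trans
              (by simpa using (List.nil_sublist w₀').append (List.Sublist.refl (a :: w₁)))
          have : (b :: b :: s₃).Sublist v := by
            rw [hv]; exact (List.cons_sublist_cons).mpr hV
          exact (h _ hs).mpr this
    · intro hsu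
      exact hsu.trans (List.sublist_cons_self b u)

lemma boost {i : ℕ} {w z z' : List A} (hw : ∀ f : A, f ∈ w) (h : SimonCong i z z') :
    SimonCong (i + 1) (w ++ z) (w ++ z') := by
  have H : ∀ (z z' : List A), SimonCong i z z' → ∀ s : List A,
      s.length ≤ i + 1 → s.Sublist (w ++ z) → s.Sublist (w ++ z') := by
    intro z z' hzz s hs hsub
    rcases List.sublist_append_iff.mp hsub with ⟨s₁, s₂, rfl, h1, h2⟩
    cases s₁ with
    | cons f s₁' =>
      have hlen : s₂.length ≤ i := by simp at hs; omega
      exact h1.append ((hzz _ hlen).mp h2)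
    | nil =>
      simp only [List.nil_append] at *
      cases s₂ with
      | nil => simp
      | cons f s₃ =>
        have h3 : s₃.Sublist z' := by
          have : s₃.Sublist z := (List.sublist_cons_self f s₃).trans h2
          exact (hzz _ (by simp at hs; omega)).mp this
        have : (([f] : List A) ++ s₃).Sublist (w ++ z') :=
          (List.singleton_sublist.mpr (hw f)).append h3
        simpa using this
  intro s hs
  exact ⟨H z z' h s hs, H z' z (simon_symm h) s hs⟩

/-- duplication: if a letter is `m`-deletable then it is `m+1`-duplicable. -/
lemma dup {m : ℕ} {x y : List A} {c : A} (h : SimonCong m (x ++ c :: y) (x ++ y)) :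
    SimonCong (m + 1) (x ++ c :: y) (x ++ c :: c :: y) := by
  intro s hs
  constructor
  · intro h1
    exact h1.trans ((List.Sublist.refl x).append
      ((List.cons_sublist_cons).mpr (List.sublist_cons_self c y)))
  · intro h1
    have h1' : s.Sublist ((x ++ [c]) ++ (c :: y)) := by simpa using h1
    rcases List.sublist_append_iff.mp h1' with ⟨p, q, rfl, hp, hq⟩
    rcases List.sublist_cons_iff.mp hq with hq' | ⟨q', rfl, hq'⟩
    · -- q <+ y
      have : (p ++ q).Sublist ((x ++ [c]) ++ y) := hp.append hq'
      simpa using this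
    · -- q = c :: q', q' <+ y
      rcases List.sublist_append_iff.mp hp with ⟨p₁, p₂, rfl, hp₁, hp₂⟩
      rcases List.sublist_singleton.mp hp₂ with rfl | rfl
      · -- p = p₁, p₁ <+ x : done directly
        have : ((p₁ ++ []) ++ c :: q').Sublist (x ++ c :: y) :=
          (by simpa using hp₁ : (p₁ ++ []).Sublist x).append
            ((List.cons_sublist_cons).mpr hq')
        exact this
      · -- p = p₁ ++ [c]
        have hlen : (p₁ ++ c :: q').length ≤ m := by
          simp at hs ⊢; omega
        have ht : (p₁ ++ c :: q').Sublist (x ++ c :: y) :=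
          hp₁.append ((List.cons_sublist_cons).mpr hq')
        have ht2 : (p₁ ++ c :: q').Sublist (x ++ y) := (h _ hlen).mp ht
        rcases c_dichotomy ht2 with hc | hc
        · -- p₁ ++ [c] <+ x
          have : ((p₁ ++ [c]) ++ c :: q').Sublist (x ++ c :: y) :=
            hc.append ((List.cons_sublist_cons).mpr hq')
          exact this
        · -- c :: q' <+ y
          have : ((p₁ ++ [c]) ++ c :: q').Sublist ((x ++ [c]) ++ y) :=
            (hp₁.append (List.Sublist.refl [c])).append hc
          simpa using this

/-- un-duplication -/
lemma undup {k : ℕ} {X Y : List A} {c : A}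
    (h : SimonCong (k + 1) (X ++ c :: Y) (X ++ c :: c :: Y)) :
    SimonCong k (X ++ c :: Y) (X ++ Y) := by
  intro s hs
  constructor
  · intro h1
    rcases List.sublist_append_iff.mp h1 with ⟨s₁, s₂, rfl, h1', h2'⟩
    rcases List.sublist_cons_iff.mp h2' with h2'' | ⟨s₃, rfl, hs₃⟩
    · exact h1'.append h2''
    · -- s = s₁ ++ c :: s₃, s₃ <+ Y
      have ht : (s₁ ++ c :: c :: s₃).Sublist (X ++ c :: c :: Y) :=
        h1'.append ((List.cons_sublist_cons).mpr ((List.cons_sublist_cons).mpr hs₃))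
      have hlen : (s₁ ++ c :: c :: s₃).length ≤ k + 1 := by simp at hs ⊢; omega
      have ht2 : (s₁ ++ c :: c :: s₃).Sublist (X ++ c :: Y) := (h _ hlen).mpr ht
      rcases c_dichotomy ht2 with hc | hc
      · -- s₁ ++ [c] <+ X
        have : ((s₁ ++ [c]) ++ s₃).Sublist (X ++ Y) := hc.append hs₃
        simpa using this
      · -- c :: c :: s₃ <+ c :: Y hence c :: s₃ <+ Y
        have hcY : (c :: s₃).Sublist Y := (List.cons_sublist_cons).mp hc
        exact h1'.append hcY
  · intro h1
    rcases List.sublist_append_iff.mp h1 with ⟨s₁, s₂, rfl, h1', h2'⟩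
    exact h1'.append (h2'.trans (List.sublist_cons_self c Y))


/-- over a binary alphabet, an insertion at level `k+1` yields a deletion at level `k`. -/
lemma stepB {c d : A} (hcd : c ≠ d) (hbin : ∀ e : A, e = c ∨ e = d) (k : ℕ)
    (x y : List A) (h : SimonCong (k + 1) (x ++ y) (x ++ c :: y)) :
    SCDel k (x ++ y) := by
  rcases y with _ | ⟨f, y'⟩
  case cons =>
    by_cases hfc : f = c
    · subst hfc
      exact ⟨x, f, y', rfl, undup h⟩
    · have hcf : c ≠ f := fun h' => hfc h'.symm
      rcases List.eq_nil_or_concat x with rfl | ⟨x', e, rfl⟩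
      · -- x = [], u = f :: y', v = c :: f :: y' : delete the leading f
        refine ⟨[], f, y', rfl, ?_⟩
        intro s hs
        simp only [List.nil_append]
        constructor
        · intro hsu
          rcases List.sublist_cons_iff.mp hsu with h' | ⟨s₃, rfl, hs₃⟩
          · exact h'
          · have ht : (c :: f :: s₃).Sublist (c :: f :: y') :=
              (List.cons_sublist_cons).mpr ((List.cons_sublist_cons).mpr hs₃)
            have hlen : (c :: f :: s₃).length ≤ k + 1 := by simp at hs ⊢; omega
            have ht2 : (c :: f :: s₃).Sublist (f :: y') := by
              have := (h _ hlen).mpr (by simpa using ht)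
              simpa using this
            have := sub_of_cons_ne ht2 hcf
            exact (List.sublist_cons_self c _).trans this
        · intro hsy; exact hsy.trans (List.sublist_cons_self f y')
      · simp only [List.concat_eq_append] at h ⊢
        by_cases hec : e = c
        · -- x ends with c : un-duplication at (x', c, f :: y')
          subst hec
          refine ⟨x', e, f :: y', by simp, ?_⟩
          have h' : SimonCong (k + 1) (x' ++ e :: f :: y') (x' ++ e :: e :: f :: y') := by
            have e1 : (x' ++ [e]) ++ f :: y' = x' ++ e :: f :: y' := by simp
            have e2 : (x' ++ [e]) ++ e :: f :: y' = x' ++ e :: e :: f :: y' := by simp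
            rw [e1, e2] at h
            exact h
          have hu := undup h'
          intro s hs
          have e1 : (x' ++ [e]) ++ f :: y' = x' ++ e :: f :: y' := by simp
          rw [e1]
          exact hu s hs
        · -- e ≠ c and f ≠ c : binary forces e = f
          have hef : e = f := by
            rcases hbin e with h1 | h1
            · exact absurd h1 hec
            · rcases hbin f with h2 | h2
              · exact absurd h2 hfc
              · rw [h1, h2]
          subst hef
          -- u = x' ++ e :: e :: y', delete x's last letter e
          refine ⟨x', e, e :: y', by simp, ?_⟩
          have hgoal : SimonCong k (x' ++ e :: e :: y') (x' ++ e :: y') := by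
            intro s hs
            constructor
            · intro hsu
              rcases List.sublist_append_iff.mp hsu with ⟨s₁, s₂, rfl, h1, h2⟩
              rcases List.sublist_cons_iff.mp h2 with h2' | ⟨s₃, rfl, hs₃⟩
              · exact h1.append h2'
              · have ht' : ((s₁ ++ [e]) ++ c :: s₃).Sublist ((x' ++ [e]) ++ c :: e :: y') :=
                  (h1.append (List.Sublist.refl [e])).append ((List.cons_sublist_cons).mpr hs₃)
                have ht : (s₁ ++ e :: c :: s₃).Sublist ((x' ++ [e]) ++ c :: e :: y') := by
                  simpa using ht'
                have hlen : (s₁ ++ e :: c :: s₃).length ≤ k + 1 := by simp at hs ⊢; omega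
                have ht2 : (s₁ ++ e :: c :: s₃).Sublist (x' ++ e :: e :: y') := by
                  have hv := (h _ hlen).mpr (by simpa using ht)
                  simpa using hv
                rcases c_dichotomy (g := e) (rest := c :: s₃) ht2 with hc1 | hc1
                · exact (by simpa using hc1.append hs₃ :
                    (s₁ ++ e :: s₃).Sublist (x' ++ e :: y'))
                · have h4 : (c :: s₃).Sublist (e :: y') := (List.cons_sublist_cons).mp hc1
                  have h5 : (c :: s₃).Sublist y' := sub_of_cons_ne h4 (fun h' => hec h'.symm)
                  have h6 : s₃.Sublist y' := (List.sublist_cons_self c s₃).trans h5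
                  exact h1.append ((List.cons_sublist_cons).mpr h6)
            · intro hsv
              rcases List.sublist_append_iff.mp hsv with ⟨s₁, s₂, rfl, h1, h2⟩
              exact h1.append (h2.trans (List.sublist_cons_self e _))
          intro s hs
          have e1 : (x' ++ [e]) ++ e :: y' = x' ++ e :: e :: y' := by simp
          rw [e1]
          exact hgoal s hs
  case nil =>
    rcases List.eq_nil_or_concat x with rfl | ⟨x', e, rfl⟩
    · exfalso
      have := (h [c] (by simp)).mpr (by simp)
      simp at this
    · simp only [List.concat_eq_append] at h ⊢
      by_cases hec : e = c
      · subst hec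
        refine ⟨x', e, [], by simp, ?_⟩
        have h' : SimonCong (k + 1) (x' ++ e :: ([] : List A)) (x' ++ e :: e :: ([] : List A)) := by
          have e1 : (x' ++ [e]) ++ ([] : List A) = x' ++ e :: [] := by simp
          have e2 : (x' ++ [e]) ++ e :: ([] : List A) = x' ++ e :: e :: [] := by simp
          rw [e1, e2] at h
          exact h
        have hu := undup h'
        intro s hs
        have e1 : (x' ++ [e]) ++ ([] : List A) = x' ++ e :: [] := by simp
        rw [e1]
        exact hu s hs
      · refine ⟨x', e, [], by simp, ?_⟩
        have hgoal : SimonCong k (x' ++ e :: ([] : List A)) (x' ++ []) := by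
          intro s hs
          constructor
          · intro hsu
            rcases List.sublist_append_iff.mp hsu with ⟨s₁, s₂, rfl, h1, h2⟩
            rcases List.sublist_cons_iff.mp h2 with h2' | ⟨s₃, rfl, hs₃⟩
            · exact h1.append h2'
            · simp only [List.sublist_nil] at hs₃
              subst hs₃
              have ht' : ((s₁ ++ [e]) ++ [c]).Sublist ((x' ++ [e]) ++ [c]) :=
                (h1.append (List.Sublist.refl [e])).append (List.Sublist.refl [c])
              have ht : (s₁ ++ e :: c :: ([] : List A)).Sublist ((x' ++ [e]) ++ [c]) := by
                simpa using ht'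
              have hlen : (s₁ ++ e :: c :: ([] : List A)).length ≤ k + 1 := by
                simp at hs ⊢; omega
              have ht2 : (s₁ ++ e :: c :: ([] : List A)).Sublist (x' ++ e :: ([] : List A)) := by
                have hv := (h _ hlen).mpr (by simpa using ht)
                simpa using hv
              rcases c_dichotomy (g := e) (rest := c :: ([] : List A)) ht2 with hc1 | hc1
              · exact by simpa using hc1.append (List.nil_sublist ([] : List A))
              · exfalso
                have h4 := (List.cons_sublist_cons).mp hc1
                simp at h4
          · intro hsv
            rcases List.sublist_append_iff.mp hsv with ⟨s₁, s₂, rfl, h1, h2⟩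
            simp only [List.sublist_nil] at h2
            subst h2
            exact h1.append (List.nil_sublist _)
        intro s hs
        have e1 : (x' ++ [e]) ++ ([] : List A) = x' ++ e :: [] := by simp
        rw [e1]
        exact hgoal s hs

lemma sub_ne {u' u : List A} (h : u'.Sublist u) (hne : u' ≠ u) :
    ∃ x : List A, ∃ c : A, ∃ y : List A, u = x ++ c :: y ∧ u'.Sublist (x ++ y) := by
  induction h with
  | slnil => exact absurd rfl hne
  | @cons l₁ l₂ a h ih =>
    exact ⟨[], a, l₂, rfl, by simpa using h⟩
  | @cons_cons l₁ l₂ a h ih =>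
    by_cases hl : l₁ = l₂
    · exact absurd (by rw [hl]) hne
    · obtain ⟨x, c, y, rfl, hsub⟩ := ih hl
      refine ⟨a :: x, c, y, rfl, ?_⟩
      have h2 : (a :: l₁).Sublist (a :: (x ++ y)) := (List.cons_sublist_cons).mpr hsub
      simpa using h2

/-- binary words: if `u ∼_{n+1} v` and `u ≠ v` then `u` has a letter deletable at level `n` -/
lemma main_del {c d : A} (hcd : c ≠ d) (hbin : ∀ e : A, e = c ∨ e = d) :
    ∀ n : ℕ, ∀ u v : List A, SimonCong (n + 1) u v → u ≠ v → SCDel n u := by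
  -- helper: the other letter of any letter
  have hoth : ∀ e : A, ∃ f : A, f ≠ e ∧ ∀ g : A, g = e ∨ g = f := by
    intro e
    rcases hbin e with rfl | rfl
    · exact ⟨d, fun h => hcd h.symm, hbin⟩
    · exact ⟨c, hcd, fun g => (hbin g).symm⟩
  intro n
  induction n with
  | zero =>
    intro u v h hne
    cases u with
    | nil =>
      exfalso
      cases v with
      | nil => exact hne rfl
      | cons e v' =>
        have : List.Sublist [e] ([] : List A) :=
          (h [e] (by simp)).mpr (List.singleton_sublist.mpr (List.mem_cons_self : e ∈ e :: v'))
        simp at this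
    | cons e u' => exact ⟨[], e, u', rfl, simon_zero _ _⟩
  | succ n ih =>
    intro u v h hne
    cases u with
    | nil =>
      exfalso
      cases v with
      | nil => exact hne rfl
      | cons e v' =>
        have : List.Sublist [e] ([] : List A) :=
          (h [e] (by simp)).mpr (List.singleton_sublist.mpr (List.mem_cons_self : e ∈ e :: v'))
        simp at this
    | cons c₁ u' =>
    cases v with
    | nil =>
      exfalso
      have : List.Sublist [c₁] ([] : List A) :=
        (h [c₁] (by simp)).mp (List.singleton_sublist.mpr (List.mem_cons_self : c₁ ∈ c₁ :: u'))
      simp at this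
    | cons c₂ v' =>
    by_cases h12 : c₁ = c₂
    · -- same head letter e := c₁
      subst h12
      obtain ⟨f, hf, hbin'⟩ := hoth c₁
      -- binary deletion lemma, instantiated for inserting letter `e'` with other letter `f'`
      by_cases hfu : f ∈ (c₁ :: u')
      · -- f occurs in u, hence in v
        have hfv : f ∈ (c₁ :: v') := by
          have : List.Sublist [f] (c₁ :: u') := List.singleton_sublist.mpr hfu
          exact List.singleton_sublist.mp ((h [f] (by simp)).mp this)
        obtain ⟨P, U₁, hPU, hPf⟩ := exists_first_occ hfu
        obtain ⟨Q, V₁, hQV, hQf⟩ := exists_first_occ hfv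
        -- P and Q are nonempty and consist of c₁'s
        have hPall : ∀ b ∈ P, b = c₁ := by
          intro b hb
          rcases hbin' b with h' | h'
          · exact h'
          · exact absurd (h' ▸ hb) hPf
        have hQall : ∀ b ∈ Q, b = c₁ := by
          intro b hb
          rcases hbin' b with h' | h'
          · exact h'
          · exact absurd (h' ▸ hb) hQf
        have hPne : P ≠ [] := by
          rintro rfl
          simp at hPU
          exact hf hPU.1.symm
        have hQne : Q ≠ [] := by
          rintro rfl
          simp at hQV
          exact hf hQV.1.symm
        have hPrep : P = List.replicate P.length c₁ := List.eq_replicate_of_mem hPall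
        have hQrep : Q = List.replicate Q.length c₁ := List.eq_replicate_of_mem hQall
        have hUV : SimonCong (n + 1) U₁ V₁ := decomp_first h hPU hPf hQV hQf
        by_cases hUVeq : U₁ = V₁
        · -- words differ only in leading block length
          subst hUVeq
          have hpq : P.length ≠ Q.length := by
            intro hl
            apply hne
            rw [hPU, hQV, hPrep, hQrep, hl]
          rcases Nat.lt_or_ge P.length Q.length with hlt | hge
          · -- u's block shorter: c₁ :: u is sandwiched below v
            have hsub1 : (c₁ :: (c₁ :: u')).Sublist (c₁ :: v') := by
              rw [hPU, hQV, hPrep, hQrep]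
              have : (c₁ :: List.replicate P.length c₁) = List.replicate (P.length + 1) c₁ := by
                simp [List.replicate_succ]
              rw [show (c₁ :: (List.replicate P.length c₁ ++ f :: U₁))
                    = (c₁ :: List.replicate P.length c₁) ++ f :: U₁ by simp, this]
              exact List.Sublist.append
                ((List.replicate_sublist_replicate c₁).mpr hlt) (List.Sublist.refl _)
            have hsw : SimonCong (n + 2) (c₁ :: u') (c₁ :: c₁ :: u') :=
              simon_sandwich_up h (List.sublist_cons_self c₁ _) hsub1
            have := stepB (Ne.symm hf) hbin' (n + 1) [] (c₁ :: u')
              (by simpa using hsw)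
            simpa using this
          · have hgt : Q.length < P.length := lt_of_le_of_ne hge (fun h' => hpq h'.symm)
            -- v is sandwiched below u minus one leading c₁
            obtain ⟨p', hp'⟩ : ∃ p', P.length = p' + 1 :=
              ⟨P.length - 1, by
                have := List.length_pos_of_ne_nil hPne; omega⟩
            have huexp : c₁ :: u' = c₁ :: (List.replicate p' c₁ ++ f :: U₁) := by
              rw [hPU, hPrep, hp']
              simp [List.replicate_succ]
            have hsub2 : (c₁ :: v').Sublist (List.replicate p' c₁ ++ f :: U₁) := by
              rw [hQV, hQrep]
              exact List.Sublist.append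
                ((List.replicate_sublist_replicate c₁).mpr (by omega)) (List.Sublist.refl _)
            have hsub3 : (List.replicate p' c₁ ++ f :: U₁).Sublist (c₁ :: u') := by
              rw [huexp]
              exact List.sublist_cons_self _ _
            have hsw : SimonCong (n + 2) (c₁ :: u') (List.replicate p' c₁ ++ f :: U₁) :=
              simon_sandwich_down h hsub2 hsub3
            exact ⟨[], c₁, List.replicate p' c₁ ++ f :: U₁, by simpa using huexp,
              by simpa using simon_mono (by omega) hsw⟩
        · -- recurse on the tails after the first `f`
          obtain ⟨x, g, y, hU₁, hdel⟩ := ih U₁ V₁ hUV hUVeq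
          have hPfull : ∀ e : A, e ∈ P ++ [f] := by
            intro e
            rcases hbin' e with rfl | rfl
            · have : e ∈ P := by
                rw [hPrep]
                exact List.mem_replicate.mpr ⟨by simpa using hPne, rfl⟩
              exact List.mem_append.mpr (Or.inl this)
            · exact List.mem_append.mpr (Or.inr (by simp))
          have hboost : SimonCong (n + 1) ((P ++ [f]) ++ U₁) ((P ++ [f]) ++ (x ++ y)) :=
            boost hPfull hdel
          refine ⟨(P ++ [f]) ++ x, g, y, ?_, ?_⟩
          · rw [hPU, hU₁]; simp
          · have e1 : (P ++ [f]) ++ U₁ = c₁ :: u' := by rw [hPU]; simp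
            have e2 : ((P ++ [f]) ++ x) ++ y = (P ++ [f]) ++ (x ++ y) := by simp
            rw [e2, ← e1]
            exact hboost
      · -- f occurs in neither word: both are blocks of c₁'s
        have hfv : f ∉ (c₁ :: v') := by
          intro hfv
          exact hfu (List.singleton_sublist.mp
            ((h [f] (by simp)).mpr (List.singleton_sublist.mpr hfv)))
        have hurep : c₁ :: u' = List.replicate (c₁ :: u').length c₁ :=
          List.eq_replicate_of_mem (fun b hb => ((hbin' b).resolve_right
            (fun h' => hfu (h' ▸ hb))))
        have hvrep : c₁ :: v' = List.replicate (c₁ :: v').length c₁ :=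
          List.eq_replicate_of_mem (fun b hb => ((hbin' b).resolve_right
            (fun h' => hfv (h' ▸ hb))))
        have hlen : (c₁ :: u').length ≠ (c₁ :: v').length := by
          intro hl
          exact hne (by rw [hurep, hvrep, hl])
        rcases Nat.lt_or_ge (c₁ :: u').length (c₁ :: v').length with hlt | hge
        · have hsub1 : (c₁ :: (c₁ :: u')).Sublist (c₁ :: v') := by
            rw [hvrep]
            conv_lhs => rw [hurep]
            rw [show (c₁ :: List.replicate (c₁ :: u').length c₁)
                  = List.replicate ((c₁ :: u').length + 1) c₁ by simp [List.replicate_succ]]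
            exact (List.replicate_sublist_replicate c₁).mpr (by omega)
          have hsw : SimonCong (n + 2) (c₁ :: u') (c₁ :: c₁ :: u') :=
            simon_sandwich_up h (List.sublist_cons_self c₁ _) hsub1
          have := stepB (Ne.symm hf) hbin' (n + 1) [] (c₁ :: u')
            (by simpa using hsw)
          simpa using this
        · have hgt : (c₁ :: v').length < (c₁ :: u').length := by
            rcases lt_of_le_of_ne hge (fun h' => hlen h'.symm) with h'
            exact h'
          have huexp : c₁ :: u' = c₁ :: List.replicate u'.length c₁ := by
            conv_lhs => rw [hurep]
            simp [List.replicate_succ]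
          have hsub2 : (c₁ :: v').Sublist (List.replicate u'.length c₁) := by
            rw [hvrep]
            exact (List.replicate_sublist_replicate c₁).mpr (by simp at hgt ⊢; omega)
          have hsub3 : (List.replicate u'.length c₁).Sublist (c₁ :: u') := by
            conv_rhs => rw [huexp]
            exact List.sublist_cons_self _ _
          have hsw : SimonCong (n + 2) (c₁ :: u') (List.replicate u'.length c₁) :=
            simon_sandwich_down h hsub2 hsub3
          exact ⟨[], c₁, List.replicate u'.length c₁, by simpa using huexp,
            by simpa using simon_mono (by omega) hsw⟩
    · -- different head letters: prepend v's head to u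
      have hI : SimonCong (n + 2) (c₂ :: (c₁ :: u')) (c₁ :: u') :=
        claim_I h rfl rfl h12
      obtain ⟨f, hf, hbin'⟩ := hoth c₂
      have := stepB (fun h' => hf h'.symm) hbin' (n + 1) [] (c₁ :: u')
        (by simpa using simon_symm hI)
      simpa using this

end SCAux

/-- over a two-letter alphabet, `h(u) = ρ(u) + 1`. -/
theorem stmt3 {A : Type*} [Fintype A] (hA : Fintype.card A = 2) (u : List A) :
    pcHeight u = pcRho u + 1 := by
  classical
  obtain ⟨c, d, hcd, hbin⟩ : ∃ c d : A, c ≠ d ∧ ∀ e : A, e = c ∨ e = d := by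
    have h2 : Nat.card A = 2 := by simpa [Nat.card_eq_fintype_card] using hA
    obtain ⟨x, y, hxy, huniv⟩ := Nat.card_eq_two_iff.mp h2
    refine ⟨x, y, hxy, fun e => ?_⟩
    have he : e ∈ ({x, y} : Set A) := huniv ▸ Set.mem_univ e
    simpa using he
  have hSrho : ({m : ℕ | Reduced m u}).Nonempty := by
    refine ⟨u.length, fun u' hsub hne hsim => ?_⟩
    have h1 : u.Sublist u' := (hsim u (le_refl _)).mp (List.Sublist.refl u)
    exact hne (hsub.antisymm h1)
  have hred : Reduced (pcRho u) u := Nat.sInf_mem hSrho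
  have hLB : ∃ v : List A, v ≠ u ∧ SimonCong (pcRho u) u v := by
    rcases hn : pcRho u with _ | m
    · refine ⟨u ++ [c], ?_, SCAux.simon_zero u _⟩
      intro h'
      have := congrArg List.length h'
      simp at this
    · have hm : ¬ Reduced m u := by
        have hlt : m < sInf {m : ℕ | Reduced m u} := by
          have : pcRho u = sInf {m : ℕ | Reduced m u} := rfl
          omega
        exact Nat.notMem_of_lt_sInf hlt
      unfold Reduced at hm
      push_neg at hm
      obtain ⟨u', hsub, hne, hsim⟩ := hm
      obtain ⟨x, c₀, y, hu, hsub'⟩ := SCAux.sub_ne hsub hne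
      have hxyu : (x ++ y).Sublist u := by
        rw [hu]; exact (List.Sublist.refl x).append (List.sublist_cons_self c₀ y)
      have hdel : SimonCong m u (x ++ y) := SCAux.simon_sandwich_down hsim hsub' hxyu
      have hdel' : SimonCong m (x ++ c₀ :: y) (x ++ y) := by rw [← hu]; exact hdel
      have hdup := SCAux.dup hdel'
      refine ⟨x ++ c₀ :: c₀ :: y, ?_, ?_⟩
      · intro h'
        have := congrArg List.length h'
        rw [hu] at this
        simp at this
      · rw [hu]
        exact hdup
  apply le_antisymm
  · apply Nat.sInf_le
    intro v hsim
    by_contra hne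
    obtain ⟨x, c₀, y, hu, hdel⟩ :=
      SCAux.main_del hcd hbin (pcRho u) u v hsim (fun h' => hne h'.symm)
    refine hred (x ++ y) ?_ ?_ hdel
    · rw [hu]; exact (List.Sublist.refl x).append (List.sublist_cons_self c₀ y)
    · intro h'
      have := congrArg List.length h'
      rw [hu] at this
      simp at this
  · apply le_csInf
    · refine ⟨u.length + 1, fun v hsim => ?_⟩
      by_contra hne
      have h1 : u.Sublist v := (hsim u (by omega)).mp (List.Sublist.refl u)
      have h2 : u.length < v.length := by
        rcases Nat.lt_or_ge u.length v.length with h' | h'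
        · exact h'
        · exact absurd (h1.eq_of_length (le_antisymm h1.length_le h')).symm hne
      have h3 : (v.take (u.length + 1)).Sublist u :=
        (hsim _ (by simp)).mpr (List.take_sublist _ v)
      have h4 := h3.length_le
      simp at h4
      omega
    · intro n hn
      by_contra hlt
      push_neg at hlt
      obtain ⟨v, hne, hsim⟩ := hLB
      exact hne (hn v (SCAux.simon_mono (by omega) hsim))
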